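/- arXiv:2009.13749 — 2 statements merged into one kernel-verified Lean document; each statement's English description precedes it below -/
import Mathlib

section
/- Assume W ⪰ σ²I with σ > 0, and let Σ be any matrix in the SDP feasible set S. Then (Σ)_{xx} is invertible and the extracted controller K = (Σ)_{xu}ᵀ (Σ)_{xx}⁻¹ is (√ν/σ, σ²/(2ν))-strongly stable for the pair (A,B). -/
open Matrix

/-- Spectral (ℓ₂ operator) norm of a real matrix. -/
noncomputable def sNorm {m n : Type*} [Fintype m] [Fintype n] [DecidableEq n]
    (M : Matrix m n ℝ) : ℝ :=
  ‖LinearMap.toContinuousLinearMap (Matrix.toEuclideanLin M)‖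

/-- Frobenius norm of a real matrix. -/
noncomputable def fNorm {m n : Type*} [Fintype m] [Fintype n] (M : Matrix m n ℝ) : ℝ :=
  Real.sqrt (Matrix.trace (Mᵀ * M))

/-- `K` is `(κ,γ)`-strongly stable for the pair `(A,B)`. -/
def StronglyStable {d k : ℕ} (A : Matrix (Fin d) (Fin d) ℝ) (B : Matrix (Fin d) (Fin k) ℝ)
    (K : Matrix (Fin k) (Fin d) ℝ) (κ γ : ℝ) : Prop :=
  0 < κ ∧ 0 < γ ∧ γ ≤ 1 ∧ sNorm K ≤ κ ∧
    ∃ H L : Matrix (Fin d) (Fin d) ℝ, IsUnit H ∧ A + B * K = H * L * H⁻¹ ∧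
      sNorm L ≤ 1 - γ ∧ sNorm H * sNorm H⁻¹ ≤ κ

/-- The feasible set of the SDP relaxation of LQ control. -/
def Feasible {d k : ℕ} (A : Matrix (Fin d) (Fin d) ℝ) (B : Matrix (Fin d) (Fin k) ℝ)
    (W : Matrix (Fin d) (Fin d) ℝ) (ν : ℝ)
    (Sg : Matrix (Fin d ⊕ Fin k) (Fin d ⊕ Fin k) ℝ) : Prop :=
  Sg.PosSemidef ∧ Sg.trace ≤ ν ∧
    Sg.toBlocks₁₁ = fromCols A B * Sg * (fromCols A B)ᵀ + W

/-- The controller `K = Σ_{xu}ᵀ Σ_{xx}⁻¹` extracted from an SDP point. -/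
noncomputable def extractK {d k : ℕ} (Sg : Matrix (Fin d ⊕ Fin k) (Fin d ⊕ Fin k) ℝ) :
    Matrix (Fin k) (Fin d) ℝ :=
  (Sg.toBlocks₁₂)ᵀ * (Sg.toBlocks₁₁)⁻¹

/-- The exploration covariance `V = Σ_{uu} - K Σ_{xx} Kᵀ` extracted from an SDP point. -/
noncomputable def extractV {d k : ℕ} (Sg : Matrix (Fin d ⊕ Fin k) (Fin d ⊕ Fin k) ℝ) :
    Matrix (Fin k) (Fin k) ℝ :=
  Sg.toBlocks₂₂ - extractK Sg * Sg.toBlocks₁₁ * (extractK Sg)ᵀ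

section Helpers

open scoped Matrix.Norms.L2Operator

open scoped MatrixOrder

set_option linter.unusedSectionVars false

variable {l m n : Type*} [Fintype l] [Fintype m] [Fintype n]

lemma sNorm_eq_l2 [DecidableEq n] (M : Matrix m n ℝ) : sNorm M = ‖M‖ := rfl

noncomputable def msqrt [DecidableEq n] (X : Matrix n n ℝ) : Matrix n n ℝ := CFC.sqrt X

lemma msqrt_mul_self [DecidableEq n] {X : Matrix n n ℝ} (hX : X.PosSemidef) :
    msqrt X * msqrt X = X := CFC.sqrt_mul_sqrt_self X hX.nonneg

lemma posSemidef_msqrt [DecidableEq n] (X : Matrix n n ℝ) : (msqrt X).PosSemidef :=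
  (CFC.sqrt_nonneg X).posSemidef

lemma conjT_eq_T (M : Matrix m n ℝ) : Mᴴ = Mᵀ := by ext i j; simp [conjTranspose_apply]

lemma sNorm_nonneg [DecidableEq n] (M : Matrix m n ℝ) : 0 ≤ sNorm M := norm_nonneg _

lemma sNorm_transpose [DecidableEq m] [DecidableEq n] (M : Matrix m n ℝ) :
    sNorm Mᵀ = sNorm M := by
  rw [sNorm_eq_l2, sNorm_eq_l2, ← conjT_eq_T, Matrix.l2_opNorm_conjTranspose]

lemma dot_self_nonneg (x : n → ℝ) : 0 ≤ x ⬝ᵥ x :=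
  Finset.sum_nonneg fun i _ => mul_self_nonneg _

lemma euclid_norm_sq (y : EuclideanSpace ℝ m) :
    ‖y‖ ^ 2 = (WithLp.equiv 2 (m → ℝ) y) ⬝ᵥ (WithLp.equiv 2 (m → ℝ) y) := by
  rw [EuclideanSpace.norm_eq, Real.sq_sqrt (Finset.sum_nonneg fun i _ => sq_nonneg _)]
  simp [dotProduct, sq]

lemma sNorm_le_of_quad [DecidableEq n] (M : Matrix m n ℝ) {c : ℝ} (hc : 0 ≤ c)
    (h : ∀ x : n → ℝ, (M *ᵥ x) ⬝ᵥ (M *ᵥ x) ≤ c ^ 2 * (x ⬝ᵥ x)) : sNorm M ≤ c := by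
  rw [sNorm]
  apply ContinuousLinearMap.opNorm_le_bound _ hc
  intro x
  have h1 : ‖(LinearMap.toContinuousLinearMap (Matrix.toEuclideanLin M)) x‖ ^ 2
      ≤ (c * ‖x‖) ^ 2 := by
    rw [euclid_norm_sq]
    have hx := euclid_norm_sq (m := n) x
    calc (WithLp.equiv 2 (m → ℝ) ((LinearMap.toContinuousLinearMap (Matrix.toEuclideanLin M)) x))
          ⬝ᵥ _ = (M *ᵥ (WithLp.equiv 2 (n → ℝ) x)) ⬝ᵥ (M *ᵥ (WithLp.equiv 2 (n → ℝ) x)) := rfl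
      _ ≤ c ^ 2 * ((WithLp.equiv 2 (n → ℝ) x) ⬝ᵥ (WithLp.equiv 2 (n → ℝ) x)) := h _
      _ = (c * ‖x‖) ^ 2 := by rw [← hx]; ring
  have := Real.sqrt_le_sqrt h1
  rwa [Real.sqrt_sq (norm_nonneg _), Real.sqrt_sq (mul_nonneg hc (norm_nonneg _))] at this

lemma dot_mulVec_left (P : Matrix m n ℝ) (x : n → ℝ) (z : m → ℝ) :
    (P *ᵥ x) ⬝ᵥ z = x ⬝ᵥ (Pᵀ *ᵥ z) := by
  rw [dotProduct_mulVec, Matrix.vecMul_transpose]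

lemma psd_quad {P : Matrix n n ℝ} (hP : P.PosSemidef) (x : n → ℝ) :
    0 ≤ x ⬝ᵥ (P *ᵥ x) := by simpa using hP.dotProduct_mulVec_nonneg x

lemma dot_CS (x y : n → ℝ) : x ⬝ᵥ y ≤ Real.sqrt (x ⬝ᵥ x) * Real.sqrt (y ⬝ᵥ y) := by
  have h := Finset.sum_mul_sq_le_sq_mul_sq Finset.univ x y
  calc x ⬝ᵥ y ≤ |x ⬝ᵥ y| := le_abs_self _
    _ = Real.sqrt ((x ⬝ᵥ y) ^ 2) := (Real.sqrt_sq_eq_abs _).symm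
    _ ≤ Real.sqrt ((x ⬝ᵥ x) * (y ⬝ᵥ y)) := by
        apply Real.sqrt_le_sqrt
        simpa [dotProduct, sq, mul_pow, pow_two] using h
    _ = _ := Real.sqrt_mul (dot_self_nonneg x) _

lemma psd_diag_nonneg {P : Matrix n n ℝ} (hP : P.PosSemidef) [DecidableEq n] (i : n) :
    0 ≤ P i i := by
  have := hP.dotProduct_mulVec_nonneg (Pi.single i 1)
  simpa [Matrix.mulVec_single, dotProduct, Pi.single_apply] using this

lemma psd_trace_nonneg {P : Matrix n n ℝ} (hP : P.PosSemidef) : 0 ≤ P.trace := by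
  classical
  exact Finset.sum_nonneg fun i _ => psd_diag_nonneg hP i

lemma quad_le_trace {P : Matrix n n ℝ} (hP : P.PosSemidef) (x : n → ℝ) :
    x ⬝ᵥ (P *ᵥ x) ≤ P.trace * (x ⬝ᵥ x) := by
  classical
  obtain ⟨C, hC⟩ : ∃ C : Matrix n n ℝ, P = Cᴴ * C :=
    ⟨msqrt P, by rw [(posSemidef_msqrt P).1.eq, msqrt_mul_self hP]⟩
  have hCt : Cᴴ = Cᵀ := conjT_eq_T C
  have hq : x ⬝ᵥ (P *ᵥ x) = (C *ᵥ x) ⬝ᵥ (C *ᵥ x) := by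
    rw [hC, hCt, ← Matrix.mulVec_mulVec, dotProduct_mulVec, Matrix.vecMul_transpose]
  have htr : P.trace = ∑ j, ∑ i, C i j ^ 2 := by
    rw [hC, hCt, Matrix.trace]
    simp [Matrix.diag, Matrix.mul_apply, sq]
  rw [hq, htr]
  have key : ∀ i, (C *ᵥ x) i ^ 2 ≤ (∑ j, C i j ^ 2) * (x ⬝ᵥ x) := by
    intro i
    have := Finset.sum_mul_sq_le_sq_mul_sq Finset.univ (fun j => C i j) x
    simpa [Matrix.mulVec, dotProduct, sq] using this
  calc (C *ᵥ x) ⬝ᵥ (C *ᵥ x) = ∑ i, (C *ᵥ x) i ^ 2 := by simp [dotProduct, sq]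
    _ ≤ ∑ i, (∑ j, C i j ^ 2) * (x ⬝ᵥ x) := Finset.sum_le_sum fun i _ => key i
    _ = (∑ j, ∑ i, C i j ^ 2) * (x ⬝ᵥ x) := by rw [← Finset.sum_mul, Finset.sum_comm]

lemma inv_quad_le [DecidableEq n] {X : Matrix n n ℝ} {σ : ℝ} (hσ : 0 < σ)
    (hlow : (X - σ ^ 2 • (1 : Matrix n n ℝ)).PosSemidef) (hu : IsUnit X) (x : n → ℝ) :
    x ⬝ᵥ (X⁻¹ *ᵥ x) ≤ 1 / σ ^ 2 * (x ⬝ᵥ x) := by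
  set y := X⁻¹ *ᵥ x with hy
  have hdet : IsUnit X.det := (Matrix.isUnit_iff_isUnit_det X).mp hu
  have hXy : X *ᵥ y = x := by
    rw [hy, Matrix.mulVec_mulVec, Matrix.mul_nonsing_inv _ hdet, Matrix.one_mulVec]
  have h1 : σ ^ 2 * (y ⬝ᵥ y) ≤ y ⬝ᵥ x := by
    have h0 := psd_quad hlow y
    rw [Matrix.sub_mulVec, dotProduct_sub, Matrix.smul_mulVec,
      Matrix.one_mulVec, dotProduct_smul, hXy] at h0
    have : σ ^ 2 • (y ⬝ᵥ y) = σ ^ 2 * (y ⬝ᵥ y) := rfl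
    linarith [h0]
  have h2 : y ⬝ᵥ x ≤ Real.sqrt (y ⬝ᵥ y) * Real.sqrt (x ⬝ᵥ x) := dot_CS y x
  have hxy : x ⬝ᵥ (X⁻¹ *ᵥ x) = y ⬝ᵥ x := by rw [← hy, dotProduct_comm]
  rw [hxy]
  set a := Real.sqrt (y ⬝ᵥ y) with ha
  set b := Real.sqrt (x ⬝ᵥ x) with hb
  have ha2 : a ^ 2 = y ⬝ᵥ y := Real.sq_sqrt (dot_self_nonneg y)
  have hb2 : b ^ 2 = x ⬝ᵥ x := Real.sq_sqrt (dot_self_nonneg x)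
  have han : 0 ≤ a := Real.sqrt_nonneg _
  have hbn : 0 ≤ b := Real.sqrt_nonneg _
  rw [← hb2]
  have hσ2 : 0 < σ ^ 2 := by positivity
  rw [← ha2] at h1
  have hA : σ ^ 2 * (y ⬝ᵥ x) ≤ σ ^ 2 * (a * b) := mul_le_mul_of_nonneg_left h2 hσ2.le
  have hB : σ ^ 2 * (σ ^ 2 * a ^ 2) ≤ σ ^ 2 * (y ⬝ᵥ x) := mul_le_mul_of_nonneg_left h1 hσ2.le
  have hC : 2 * (σ ^ 2 * (a * b)) ≤ σ ^ 2 * (σ ^ 2 * a ^ 2) + b ^ 2 := by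
    nlinarith [sq_nonneg (σ ^ 2 * a - b)]
  have hD : (y ⬝ᵥ x) * σ ^ 2 ≤ b ^ 2 := by linarith
  rw [one_div, inv_mul_eq_div]
  exact (le_div_iff₀ hσ2).mpr hD

end Helpers

set_option maxHeartbeats 1000000 in
/-- any feasible point of the SDP yields an invertible `Σ_{xx}` and a
`(√ν/σ, σ²/(2ν))`-strongly stable extracted controller. -/
theorem stmt4 {d k : ℕ} (hd : 0 < d)
    (A : Matrix (Fin d) (Fin d) ℝ) (B : Matrix (Fin d) (Fin k) ℝ)
    (W : Matrix (Fin d) (Fin d) ℝ) (ν σ : ℝ) (hσ : 0 < σ) (hν : 0 < ν)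
    (hW : (W - σ ^ 2 • (1 : Matrix (Fin d) (Fin d) ℝ)).PosSemidef)
    (Sg : Matrix (Fin d ⊕ Fin k) (Fin d ⊕ Fin k) ℝ)
    (hfeas : Feasible A B W ν Sg) :
    IsUnit Sg.toBlocks₁₁ ∧
      StronglyStable A B (extractK Sg) (Real.sqrt ν / σ) (σ ^ 2 / (2 * ν)) := by
  obtain ⟨hpsd, htr, hblk⟩ := hfeas
  set X := Sg.toBlocks₁₁ with hXdef
  set S := Sg.toBlocks₁₂ with hSdef
  set U := Sg.toBlocks₂₂ with hUdef
  set F := fromCols A B with hFdef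
  set K := extractK Sg with hKdef
  -- basic block structure
  have hsym : Sg.toBlocks₂₁ = Sᵀ := by
    ext i j
    have := congrFun (congrFun hpsd.1 (Sum.inr i)) (Sum.inl j)
    simp only [Matrix.conjTranspose_apply, star_trivial] at this
    simp [Matrix.toBlocks₂₁, Matrix.toBlocks₁₂, hSdef, Matrix.transpose_apply]
    exact this.symm
  have hSg : Sg = fromBlocks X S Sᵀ U := by
    rw [← Matrix.fromBlocks_toBlocks Sg, ← hsym]
  have hXsym : Xᵀ = X := by
    have := hpsd.1.submatrix (Sum.inl : Fin d → Fin d ⊕ Fin k)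
    have h2 : X.IsHermitian := this
    rw [← conjT_eq_T]; exact h2
  have hXpsd : X.PosSemidef := hpsd.submatrix Sum.inl
  have hUpsd : U.PosSemidef := hpsd.submatrix Sum.inr
  -- positivity of X
  have hFpsd : (F * Sg * Fᵀ).PosSemidef := by
    have := hpsd.mul_mul_conjTranspose_same F
    rwa [conjT_eq_T] at this
  have hXlow : (X - σ ^ 2 • (1 : Matrix (Fin d) (Fin d) ℝ)).PosSemidef := by
    have : X - σ ^ 2 • (1 : Matrix (Fin d) (Fin d) ℝ)
        = F * Sg * Fᵀ + (W - σ ^ 2 • 1) := by rw [hblk]; abel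
    rw [this]; exact hFpsd.add hW
  have hIpd : (σ ^ 2 • (1 : Matrix (Fin d) (Fin d) ℝ)).PosDef := by
    refine Matrix.PosDef.of_dotProduct_mulVec_pos ?_ ?_
    · simp [Matrix.IsHermitian]
    · intro x hx
      have hxx : 0 < x ⬝ᵥ x :=
        lt_of_le_of_ne (dot_self_nonneg x) (Ne.symm (mt dotProduct_self_eq_zero.mp hx))
      have : (star x) ⬝ᵥ ((σ ^ 2 • (1 : Matrix (Fin d) (Fin d) ℝ)) *ᵥ x) = σ ^ 2 * (x ⬝ᵥ x) := by
        simp [Matrix.smul_mulVec, Matrix.one_mulVec, dotProduct_smul]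
      rw [this]; positivity
  have hXpd : X.PosDef := by
    have : X = (X - σ ^ 2 • (1 : Matrix (Fin d) (Fin d) ℝ)) + σ ^ 2 • 1 := by abel
    rw [this]; exact Matrix.PosDef.posSemidef_add hXlow hIpd
  have hXu : IsUnit X := hXpd.isUnit
  have hdet : IsUnit X.det := (Matrix.isUnit_iff_isUnit_det X).mp hXu
  have hXinvT : X⁻¹ᵀ = X⁻¹ := by rw [Matrix.transpose_nonsing_inv, hXsym]
  -- controller identities
  have hKX : K * X = Sᵀ := by
    rw [hKdef, extractK, ← hSdef, ← hXdef, Matrix.mul_assoc,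
      Matrix.nonsing_inv_mul _ hdet, Matrix.mul_one]
  have hKT : Kᵀ = X⁻¹ * S := by
    rw [hKdef, extractK, Matrix.transpose_mul, Matrix.transpose_transpose, ← hSdef, ← hXdef,
      hXinvT]
  have hXKT : X * Kᵀ = S := by
    rw [hKT, ← Matrix.mul_assoc, Matrix.mul_nonsing_inv _ hdet, Matrix.one_mul]
  -- Schur complement: V is PSD
  haveI := Matrix.invertibleOfIsUnitDet X hdet
  have hVpsd : (extractV Sg).PosSemidef := by
    have hsch := (Matrix.PosDef.fromBlocks₁₁ S U hXpd).mp (by rw [conjT_eq_T, ← hSg]; exact hpsd)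
    have : extractV Sg = U - Sᴴ * X⁻¹ * S := by
      rw [extractV, ← hUdef, ← hXdef, ← hKdef, conjT_eq_T, Matrix.mul_assoc, hXKT,
        hKdef, extractK, ← hSdef, ← hXdef]
    rw [this]; exact hsch
  set V := extractV Sg with hVdef
  -- traces
  have hsumtr : Sg.trace = X.trace + U.trace := by
    simp [Matrix.trace, Matrix.diag, Fintype.sum_sum_type, hXdef, hUdef,
      Matrix.toBlocks₁₁, Matrix.toBlocks₂₂]
  have htrX : X.trace ≤ ν := by linarith [psd_trace_nonneg hUpsd, hsumtr ▸ htr]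
  have htrU : U.trace ≤ ν := by linarith [psd_trace_nonneg hXpsd, hsumtr ▸ htr]
  -- quadratic form bounds
  have hqX : ∀ x, x ⬝ᵥ (X *ᵥ x) ≤ ν * (x ⬝ᵥ x) := fun x =>
    le_trans (quad_le_trace hXpsd x) (mul_le_mul_of_nonneg_right htrX (dot_self_nonneg x))
  have hqU : ∀ u, u ⬝ᵥ (U *ᵥ u) ≤ ν * (u ⬝ᵥ u) := fun u =>
    le_trans (quad_le_trace hUpsd u) (mul_le_mul_of_nonneg_right htrU (dot_self_nonneg u))
  have hqXlow : ∀ x, σ ^ 2 * (x ⬝ᵥ x) ≤ x ⬝ᵥ (X *ᵥ x) := by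
    intro x
    have h0 := psd_quad hXlow x
    rw [Matrix.sub_mulVec, dotProduct_sub, Matrix.smul_mulVec,
      Matrix.one_mulVec, dotProduct_smul] at h0
    have : σ ^ 2 • (x ⬝ᵥ x) = σ ^ 2 * (x ⬝ᵥ x) := rfl
    linarith [h0]
  -- σ² ≤ ν
  have hσν : σ ^ 2 ≤ ν := by
    have h1 : (σ ^ 2 • (1 : Matrix (Fin d) (Fin d) ℝ)).trace ≤ X.trace := by
      have := psd_trace_nonneg hXlow
      rw [Matrix.trace_sub] at this
      linarith
    have h2 : (σ ^ 2 • (1 : Matrix (Fin d) (Fin d) ℝ)).trace = (d : ℝ) * σ ^ 2 := by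
      simp [Matrix.trace_smul, Matrix.trace_one, mul_comm]
    have hd1 : (1 : ℝ) ≤ (d : ℝ) := by exact_mod_cast hd
    nlinarith [h1, h2, htrX, sq_nonneg σ]
  -- key matrix identity and inequality
  set M := A + B * K with hMdef
  have hFSF : F * Sg * Fᵀ = A * X * Aᵀ + B * Sᵀ * Aᵀ + (A * S * Bᵀ + B * U * Bᵀ) := by
    rw [hSg, hFdef, fromCols_mul_fromBlocks, transpose_fromCols, fromCols_mul_fromRows]
    simp only [Matrix.add_mul, Matrix.mul_assoc]
  have hVU : V = U - K * X * Kᵀ := by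
    rw [hVdef, extractV, ← hKdef, ← hUdef, ← hXdef]
  have hU' : U = V + K * X * Kᵀ := by rw [hVU, sub_add_cancel]
  have hMXM : M * X * Mᵀ + B * V * Bᵀ = F * Sg * Fᵀ := by
    rw [hFSF, ← hKX, ← hXKT, hU', hMdef]
    simp only [Matrix.transpose_add, Matrix.transpose_mul, Matrix.add_mul, Matrix.mul_add,
      Matrix.mul_assoc]
    abel
  have hBV : (B * V * Bᵀ).PosSemidef := by
    have := hVpsd.mul_mul_conjTranspose_same B
    rwa [conjT_eq_T] at this
  have hMkey : (X - σ ^ 2 • (1 : Matrix (Fin d) (Fin d) ℝ) - M * X * Mᵀ).PosSemidef := by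
    have hEq : X - σ ^ 2 • (1 : Matrix (Fin d) (Fin d) ℝ) - M * X * Mᵀ
        = (W - σ ^ 2 • 1) + B * V * Bᵀ := by
      nth_rewrite 1 [hblk]
      rw [← hMXM]
      abel
    rw [hEq]; exact hW.add hBV
  have hqM : ∀ x, x ⬝ᵥ ((M * X * Mᵀ) *ᵥ x) ≤ (1 - σ ^ 2 / ν) * (x ⬝ᵥ (X *ᵥ x)) := by
    intro x
    have h0 := psd_quad hMkey x
    rw [Matrix.sub_mulVec, Matrix.sub_mulVec, dotProduct_sub, dotProduct_sub,
      Matrix.smul_mulVec, Matrix.one_mulVec, dotProduct_smul] at h0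
    have hsmul : σ ^ 2 • (x ⬝ᵥ x) = σ ^ 2 * (x ⬝ᵥ x) := rfl
    rw [hsmul] at h0
    have h1 : σ ^ 2 / ν * (x ⬝ᵥ (X *ᵥ x)) ≤ σ ^ 2 * (x ⬝ᵥ x) := by
      have hb := mul_le_mul_of_nonneg_left (hqX x)
        (le_of_lt (div_pos (by positivity) hν) : (0:ℝ) ≤ σ ^ 2 / ν)
      calc σ ^ 2 / ν * (x ⬝ᵥ (X *ᵥ x)) ≤ σ ^ 2 / ν * (ν * (x ⬝ᵥ x)) := hb
        _ = σ ^ 2 * (x ⬝ᵥ x) := by field_simp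
    nlinarith [h0, h1]
  have hc0 : 0 ≤ 1 - σ ^ 2 / ν := by
    have : σ ^ 2 / ν ≤ 1 := (div_le_one hν).mpr hσν
    linarith
  -- square root H of X
  set H := msqrt X with hHdef
  have hHH : H * H = X := msqrt_mul_self hXpd.posSemidef
  have hHpsd : H.PosSemidef := posSemidef_msqrt X
  have hHsym : Hᵀ = H := by rw [← conjT_eq_T]; exact hHpsd.1
  have hHdet : IsUnit H.det := by
    have h2 : IsUnit (H.det * H.det) := by rw [← Matrix.det_mul, hHH]; exact hdet
    exact (IsUnit.mul_iff.mp h2).1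
  have hHu : IsUnit H := (Matrix.isUnit_iff_isUnit_det H).mpr hHdet
  have hHiH : H⁻¹ * H = 1 := Matrix.nonsing_inv_mul _ hHdet
  have hHHi : H * H⁻¹ = 1 := Matrix.mul_nonsing_inv _ hHdet
  have hHisym : H⁻¹ᵀ = H⁻¹ := by rw [Matrix.transpose_nonsing_inv, hHsym]
  have hXinv : X⁻¹ = H⁻¹ * H⁻¹ := by rw [← hHH, Matrix.mul_inv_rev]
  set L := H⁻¹ * M * H with hLdef
  have hfact : M = H * L * H⁻¹ := by
    rw [hLdef]
    calc M = (H * H⁻¹) * M * (H * H⁻¹) := by rw [hHHi, Matrix.one_mul, Matrix.mul_one]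
      _ = H * (H⁻¹ * M * H) * H⁻¹ := by simp only [Matrix.mul_assoc]
  -- norm bounds
  have hHnorm : sNorm H ≤ Real.sqrt ν := by
    apply sNorm_le_of_quad _ (Real.sqrt_nonneg _)
    intro x
    rw [Real.sq_sqrt hν.le, dot_mulVec_left, Matrix.mulVec_mulVec, hHsym, hHH]
    exact hqX x
  have hHinvnorm : sNorm H⁻¹ ≤ 1 / σ := by
    apply sNorm_le_of_quad _ (by positivity)
    intro x
    rw [div_pow, one_pow, dot_mulVec_left, Matrix.mulVec_mulVec, hHisym, ← hXinv]
    exact inv_quad_le hσ hXlow hXu x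
  have hKnorm : sNorm K ≤ Real.sqrt ν / σ := by
    rw [← sNorm_transpose]
    apply sNorm_le_of_quad _ (by positivity)
    intro u
    have hw := hqXlow (Kᵀ *ᵥ u)
    have hquad : (Kᵀ *ᵥ u) ⬝ᵥ (X *ᵥ (Kᵀ *ᵥ u)) = u ⬝ᵥ ((K * X * Kᵀ) *ᵥ u) := by
      rw [dot_mulVec_left, Matrix.transpose_transpose, Matrix.mulVec_mulVec,
        Matrix.mulVec_mulVec, Matrix.mul_assoc]
    have hVq : u ⬝ᵥ ((K * X * Kᵀ) *ᵥ u) ≤ u ⬝ᵥ (U *ᵥ u) := by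
      have h0 := psd_quad hVpsd u
      rw [hVU, Matrix.sub_mulVec, dotProduct_sub] at h0
      linarith
    have hU2 := hqU u
    rw [div_pow, Real.sq_sqrt hν.le]
    rw [hquad] at hw
    have hσ2 : (0:ℝ) < σ ^ 2 := by positivity
    rw [div_mul_eq_mul_div, le_div_iff₀ hσ2]
    nlinarith [hw, hVq, hU2]
  have hLnorm : sNorm L ≤ Real.sqrt (1 - σ ^ 2 / ν) := by
    rw [← sNorm_transpose]
    apply sNorm_le_of_quad _ (Real.sqrt_nonneg _)
    intro x
    rw [Real.sq_sqrt hc0]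
    have hLT : Lᵀ = H * (Mᵀ * H⁻¹) := by
      rw [hLdef, Matrix.transpose_mul, Matrix.transpose_mul, hHsym, hHisym]
    have hLLT : L * Lᵀ = H⁻¹ * (M * X * Mᵀ) * H⁻¹ := by
      rw [hLT, hLdef]
      calc H⁻¹ * M * H * (H * (Mᵀ * H⁻¹)) = H⁻¹ * (M * ((H * H) * (Mᵀ * H⁻¹))) := by
            simp only [Matrix.mul_assoc]
        _ = H⁻¹ * (M * (X * (Mᵀ * H⁻¹))) := by rw [hHH]
        _ = H⁻¹ * (M * X * Mᵀ) * H⁻¹ := by simp only [Matrix.mul_assoc]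
    rw [dot_mulVec_left, Matrix.transpose_transpose, Matrix.mulVec_mulVec, hLLT]
    have hswap : x ⬝ᵥ ((H⁻¹ * (M * X * Mᵀ) * H⁻¹) *ᵥ x)
        = (H⁻¹ *ᵥ x) ⬝ᵥ ((M * X * Mᵀ) *ᵥ (H⁻¹ *ᵥ x)) := by
      rw [dot_mulVec_left H⁻¹ x ((M * X * Mᵀ) *ᵥ (H⁻¹ *ᵥ x)), hHisym,
        Matrix.mulVec_mulVec, Matrix.mulVec_mulVec, Matrix.mul_assoc]
    rw [hswap]
    have hcore := hqM (H⁻¹ *ᵥ x)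
    have hXq : (H⁻¹ *ᵥ x) ⬝ᵥ (X *ᵥ (H⁻¹ *ᵥ x)) = x ⬝ᵥ x := by
      rw [dot_mulVec_left, hHisym, Matrix.mulVec_mulVec, Matrix.mulVec_mulVec]
      have h1 : H⁻¹ * X * H⁻¹ = 1 := by
        rw [Matrix.mul_assoc]
        calc H⁻¹ * (X * H⁻¹) = H⁻¹ * (H * (H * H⁻¹)) := by rw [← hHH, Matrix.mul_assoc]
          _ = H⁻¹ * H := by rw [hHHi, Matrix.mul_one]
          _ = 1 := hHiH
      rw [h1, Matrix.one_mulVec]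
    rw [hXq] at hcore
    exact hcore
  have hfin : Real.sqrt (1 - σ ^ 2 / ν) ≤ 1 - σ ^ 2 / (2 * ν) := by
    have hhalf : σ ^ 2 / (2 * ν) ≤ 1 / 2 := by
      rw [div_le_div_iff₀ (by positivity) (by norm_num)]
      nlinarith [hσν]
    have h2 : 0 ≤ 1 - σ ^ 2 / (2 * ν) := by linarith
    have h3 : 1 - σ ^ 2 / ν ≤ (1 - σ ^ 2 / (2 * ν)) ^ 2 := by
      have hid : σ ^ 2 / ν = 2 * (σ ^ 2 / (2 * ν)) := by field_simp
      rw [hid]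
      nlinarith [sq_nonneg (σ ^ 2 / (2 * ν))]
    calc Real.sqrt (1 - σ ^ 2 / ν) ≤ Real.sqrt ((1 - σ ^ 2 / (2 * ν)) ^ 2) :=
          Real.sqrt_le_sqrt h3
      _ = 1 - σ ^ 2 / (2 * ν) := Real.sqrt_sq h2
  have hκpos : 0 < Real.sqrt ν / σ := div_pos (Real.sqrt_pos.mpr hν) hσ
  have hγpos : 0 < σ ^ 2 / (2 * ν) := by positivity
  have hγ1 : σ ^ 2 / (2 * ν) ≤ 1 := by
    rw [div_le_one (by positivity)]
    nlinarith [hσν]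
  have hHprod : sNorm H * sNorm H⁻¹ ≤ Real.sqrt ν / σ := by
    have h4 := mul_le_mul hHnorm hHinvnorm (sNorm_nonneg _) (Real.sqrt_nonneg _)
    rwa [mul_one_div] at h4
  have hfacteq : A + B * K = H * L * H⁻¹ := by rw [← hMdef]; exact hfact
  exact ⟨hXu, hκpos, hγpos, hγ1, hKnorm, H, L, hHu, hfacteq, hLnorm.trans hfin, hHprod⟩
end

section
/- Consider the distributed online gradient descent update on the SDP feasible set S: with all agents initialized at a common Σ_{i,1} = Σ_1 ∈ S and Σ_{i,t+1} = Π_S(Σ_{j=1}^m [P]_{ji} Σ_{j,t} − η L_{i,t}), under the network and cost assumptions below. Then for every agent j and every time t, the consecutive iterates satisfy ‖Σ_{j,t+1} − Σ_{j,t}‖_F ≤ 4√(2m) C η / (1 − β). -/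
open Matrix

-- ===== auxiliary lemmas =====

section Aux

open Matrix

/-- Matrices into Euclidean space, as a linear map. -/
noncomputable def toE {a b : Type*} [Fintype a] [Fintype b] :
    Matrix a b ℝ →ₗ[ℝ] EuclideanSpace ℝ (a × b) where
  toFun M := (WithLp.equiv 2 _).symm (fun p => M p.1 p.2)
  map_add' _ _ := rfl
  map_smul' _ _ := rfl

lemma toE_apply {a b : Type*} [Fintype a] [Fintype b] (M : Matrix a b ℝ) (p : a × b) :
    toE M p = M p.1 p.2 := rfl

lemma trace_transpose_mul_self {a b : Type*} [Fintype a] [Fintype b] (M : Matrix a b ℝ) :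
    Matrix.trace (Mᵀ * M) = ∑ p : a × b, (M p.1 p.2) ^ 2 := by
  rw [Fintype.sum_prod_type, Finset.sum_comm]
  simp [Matrix.trace, Matrix.mul_apply, Matrix.diag, sq]

lemma fNorm_eq' {a b : Type*} [Fintype a] [Fintype b] (M : Matrix a b ℝ) :
    fNorm M = ‖toE M‖ := by
  rw [fNorm, EuclideanSpace.norm_eq, trace_transpose_mul_self]
  congr 1
  refine Finset.sum_congr rfl fun p _ => ?_
  rw [toE_apply, Real.norm_eq_abs, sq_abs]

lemma fNorm_nonneg' {a b : Type*} [Fintype a] [Fintype b] (M : Matrix a b ℝ) :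
    0 ≤ fNorm M := Real.sqrt_nonneg _

lemma fNorm_add_le {a b : Type*} [Fintype a] [Fintype b] (M N : Matrix a b ℝ) :
    fNorm (M + N) ≤ fNorm M + fNorm N := by
  rw [fNorm_eq', fNorm_eq', fNorm_eq', map_add]; exact norm_add_le _ _

lemma fNorm_neg' {a b : Type*} [Fintype a] [Fintype b] (M : Matrix a b ℝ) :
    fNorm (-M) = fNorm M := by
  rw [fNorm_eq', fNorm_eq', map_neg]; exact norm_neg _

lemma fNorm_smul' {a b : Type*} [Fintype a] [Fintype b] (c : ℝ) (M : Matrix a b ℝ) :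
    fNorm (c • M) = |c| * fNorm M := by
  rw [fNorm_eq', fNorm_eq', toE.map_smul, norm_smul, Real.norm_eq_abs]

lemma sNorm_nonneg_s15 {q : ℕ} (A : Matrix (Fin q) (Fin q) ℝ) : 0 ≤ sNorm A :=
  norm_nonneg _

lemma sNorm_transpose_s15 {q : ℕ} (A : Matrix (Fin q) (Fin q) ℝ) : sNorm Aᵀ = sNorm A := by
  unfold sNorm
  rw [← Matrix.conjTranspose_eq_transpose_of_trivial,
    Matrix.toEuclideanLin_conjTranspose_eq_adjoint,
    LinearMap.adjoint_toContinuousLinearMap]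
  exact ContinuousLinearMap.adjoint.norm_map _

lemma norm_symm_eq {q : ℕ} (v : Fin q → ℝ) :
    ‖(WithLp.equiv 2 (Fin q → ℝ)).symm v‖ ^ 2 = ∑ i, v i ^ 2 := by
  rw [EuclideanSpace.norm_eq, Real.sq_sqrt (by positivity)]
  simp [sq_abs]

lemma sqsum_mulVec_le {q : ℕ} (A : Matrix (Fin q) (Fin q) ℝ) (v : Fin q → ℝ) :
    ∑ i, ((Aᵀ *ᵥ v) i) ^ 2 ≤ sNorm A ^ 2 * ∑ i, v i ^ 2 := by
  have h1 : ∑ i, ((Aᵀ *ᵥ v) i) ^ 2 = ‖(WithLp.equiv 2 (Fin q → ℝ)).symm (Aᵀ *ᵥ v)‖ ^ 2 :=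
    (norm_symm_eq _).symm
  have h2 : (WithLp.equiv 2 (Fin q → ℝ)).symm (Aᵀ *ᵥ v) =
      Matrix.toEuclideanLin Aᵀ ((WithLp.equiv 2 (Fin q → ℝ)).symm v) := by
    rfl
  have h3 : ‖Matrix.toEuclideanLin Aᵀ ((WithLp.equiv 2 (Fin q → ℝ)).symm v)‖ ≤
      sNorm Aᵀ * ‖(WithLp.equiv 2 (Fin q → ℝ)).symm v‖ := by
    have := (LinearMap.toContinuousLinearMap (Matrix.toEuclideanLin Aᵀ)).le_opNorm
      ((WithLp.equiv 2 (Fin q → ℝ)).symm v)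
    simpa only [sNorm, LinearMap.coe_toContinuousLinearMap'] using this
  rw [h1, h2, ← norm_symm_eq v]
  rw [sNorm_transpose_s15] at h3
  calc ‖Matrix.toEuclideanLin Aᵀ ((WithLp.equiv 2 (Fin q → ℝ)).symm v)‖ ^ 2
      ≤ (sNorm A * ‖(WithLp.equiv 2 (Fin q → ℝ)).symm v‖) ^ 2 := by
        apply sq_le_sq' _ h3
        nlinarith [norm_nonneg (Matrix.toEuclideanLin Aᵀ ((WithLp.equiv 2 (Fin q → ℝ)).symm v))]
    _ = sNorm A ^ 2 * ‖(WithLp.equiv 2 (Fin q → ℝ)).symm v‖ ^ 2 := by ring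

lemma euclid_sum_apply {ι κ : Type*} [Fintype ι] (s : Finset κ)
    (f : κ → EuclideanSpace ℝ ι) (p : ι) : (∑ k ∈ s, f k) p = ∑ k ∈ s, f k p := by
  induction s using Finset.cons_induction with
  | empty => rfl
  | cons a s ha ih => rw [Finset.sum_cons, Finset.sum_cons, ← ih]; rfl

lemma euclid_norm_sq_s15 {ι : Type*} [Fintype ι] (x : EuclideanSpace ℝ ι) :
    ‖x‖ ^ 2 = ∑ p, x p ^ 2 := by
  rw [EuclideanSpace.norm_eq, Real.sq_sqrt (by positivity)]
  simp [sq_abs]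

lemma variance_le {ι : Type*} [Fintype ι] {q : ℕ} (u : Fin q → EuclideanSpace ℝ ι) :
    ∑ i, ‖u i - (q : ℝ)⁻¹ • ∑ i', u i'‖ ^ 2 ≤ ∑ i, ‖u i‖ ^ 2 := by
  rcases Nat.eq_zero_or_pos q with hq | hq
  · subst hq; simp
  set c : EuclideanSpace ℝ ι := (q : ℝ)⁻¹ • ∑ i', u i' with hc
  have hsum : ∑ i', u i' = (q : ℝ) • c := by
    rw [hc, smul_smul, mul_inv_cancel₀ (by positivity), one_smul]
  have expand : ∀ i, ‖u i - c‖ ^ 2 = ‖u i‖ ^ 2 - 2 * inner ℝ (u i) c + ‖c‖ ^ 2 :=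
    fun i => norm_sub_sq_real (u i) c
  have hinner : ∑ i, inner ℝ (u i) c = (q : ℝ) * ‖c‖ ^ 2 := by
    rw [← sum_inner, hsum, real_inner_smul_left, real_inner_self_eq_norm_sq]
  calc ∑ i, ‖u i - c‖ ^ 2 = ∑ i, ‖u i‖ ^ 2 - 2 * ((q:ℝ) * ‖c‖^2) + (q:ℝ) * ‖c‖ ^ 2 := by
        simp only [expand, Finset.sum_add_distrib, Finset.sum_sub_distrib,
          ← Finset.mul_sum, hinner, Finset.sum_const, Finset.card_univ, Fintype.card_fin,
          nsmul_eq_mul]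
    _ ≤ ∑ i, ‖u i‖ ^ 2 := by nlinarith [sq_nonneg ‖c‖, (Nat.one_le_cast.mpr hq : (1:ℝ) ≤ q)]

lemma mix_bound {ι : Type*} [Fintype ι] {q : ℕ} (A : Matrix (Fin q) (Fin q) ℝ)
    (x : Fin q → EuclideanSpace ℝ ι) :
    ∑ i, ‖∑ j, A j i • x j‖ ^ 2 ≤ sNorm A ^ 2 * ∑ j, ‖x j‖ ^ 2 := by
  have key : ∀ i p, (∑ j, A j i • x j) p = (Aᵀ *ᵥ (fun j => x j p)) i := by
    intro i p
    rw [euclid_sum_apply]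
    simp [Matrix.mulVec, dotProduct]
  calc ∑ i, ‖∑ j, A j i • x j‖ ^ 2
      = ∑ i, ∑ p, ((Aᵀ *ᵥ (fun j => x j p)) i) ^ 2 := by
        refine Finset.sum_congr rfl fun i _ => ?_
        rw [euclid_norm_sq_s15]
        exact Finset.sum_congr rfl fun p _ => by rw [key]
    _ = ∑ p, ∑ i, ((Aᵀ *ᵥ (fun j => x j p)) i) ^ 2 := Finset.sum_comm
    _ ≤ ∑ p : ι, sNorm A ^ 2 * ∑ j, (x j p) ^ 2 :=
        Finset.sum_le_sum fun p _ => sqsum_mulVec_le A _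
    _ = sNorm A ^ 2 * ∑ j, ‖x j‖ ^ 2 := by
        rw [← Finset.mul_sum, Finset.sum_comm]
        congr 1
        exact Finset.sum_congr rfl fun j _ => (euclid_norm_sq_s15 _).symm

lemma le_of_sq_le_sq' {a c : ℝ} (ha : 0 ≤ a) (hc : 0 ≤ c) (h : a ^ 2 ≤ c ^ 2) : a ≤ c := by
  rw [← Real.sqrt_sq ha, ← Real.sqrt_sq hc]
  exact Real.sqrt_le_sqrt h

section Frob
attribute [local instance] Matrix.frobeniusSeminormedAddCommGroup

lemma rnorm_rpow_two (x : ℝ) : ‖x‖ ^ (2:ℝ) = x ^ 2 := by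
  rw [show ((2:ℝ)) = ((2:ℕ):ℝ) by norm_num, Real.rpow_natCast, Real.norm_eq_abs, sq_abs]

lemma trace_tmul_nonneg {a b : Type*} [Fintype a] [Fintype b] (M : Matrix a b ℝ) :
    0 ≤ Matrix.trace (Mᵀ * M) := by
  have : Matrix.trace (Mᵀ * M) = ∑ j, ∑ i, M i j ^ 2 := by
    simp [Matrix.trace, Matrix.mul_apply, Matrix.diag, sq]
  rw [this]; positivity

lemma frob_norm_sq {a b : Type*} [Fintype a] [Fintype b] (M : Matrix a b ℝ) :
    ‖M‖ ^ 2 = Matrix.trace (Mᵀ * M) := by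
  have hS : Matrix.trace (Mᵀ * M) = ∑ i, ∑ j, ‖M i j‖ ^ (2:ℝ) := by
    have h1 : Matrix.trace (Mᵀ * M) = ∑ j, ∑ i, M i j ^ 2 := by
      simp [Matrix.trace, Matrix.mul_apply, Matrix.diag, sq]
    rw [h1, Finset.sum_comm]
    exact Finset.sum_congr rfl fun i _ => Finset.sum_congr rfl fun j _ =>
      (rnorm_rpow_two _).symm
  rw [Matrix.frobenius_norm_def, ← hS, ← Real.rpow_natCast _ 2,
    ← Real.rpow_mul (trace_tmul_nonneg M)]
  norm_num

lemma fNorm_psd_le_trace {n : Type*} [Fintype n] [DecidableEq n]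
    {M : Matrix n n ℝ} (hM : M.PosSemidef) : fNorm M ≤ Matrix.trace M := by
  obtain ⟨B, rfl⟩ : ∃ B : Matrix n n ℝ, M = Bᴴ * B := by
    open scoped MatrixOrder in
    obtain ⟨B, hB⟩ := CStarAlgebra.nonneg_iff_eq_star_mul_self.mp hM.nonneg
    exact ⟨B, hB⟩
  have hH : (Bᴴ : Matrix n n ℝ) = Bᵀ := Matrix.conjTranspose_eq_transpose_of_trivial B
  rw [hH]
  have key : Matrix.trace ((Bᵀ*B)ᵀ * (Bᵀ*B)) = Matrix.trace ((B*Bᵀ)ᵀ * (B*Bᵀ)) := by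
    rw [Matrix.transpose_mul, Matrix.transpose_transpose, Matrix.transpose_mul,
      Matrix.transpose_transpose, Matrix.mul_assoc Bᵀ B (Bᵀ*B), Matrix.trace_mul_comm]
    congr 1
    simp [Matrix.mul_assoc]
  have h1 : fNorm (Bᵀ * B) = ‖B * Bᵀ‖ := by
    rw [fNorm, key, ← frob_norm_sq, Real.sqrt_sq (norm_nonneg _)]
  have h2 : Matrix.trace (Bᵀ * B) = ‖B‖ ^ 2 := (frob_norm_sq B).symm
  rw [h1, h2]
  calc ‖B * Bᵀ‖ ≤ ‖B‖ * ‖Bᵀ‖ := Matrix.frobenius_norm_mul B Bᵀ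
    _ = ‖B‖ ^ 2 := by rw [Matrix.frobenius_norm_transpose]; ring

end Frob

lemma trace_fromBlocks' {d k : ℕ} (X : Matrix (Fin d) (Fin d) ℝ) (Y : Matrix (Fin k) (Fin k) ℝ)
    (Z : Matrix (Fin d) (Fin k) ℝ) (U : Matrix (Fin k) (Fin d) ℝ) :
    Matrix.trace (fromBlocks X Z U Y) = Matrix.trace X + Matrix.trace Y := by
  simp [Matrix.trace, Fintype.sum_sum_type, Matrix.diag]

lemma fNorm_fromBlocks_le {d k : ℕ} {Q : Matrix (Fin d) (Fin d) ℝ}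
    {R : Matrix (Fin k) (Fin k) ℝ} {C : ℝ} (hC : 0 ≤ C)
    (hQ : fNorm Q ≤ C) (hR : fNorm R ≤ C) :
    fNorm (fromBlocks Q 0 0 R) ≤ Real.sqrt 2 * C := by
  have hT : (fromBlocks Q 0 0 R)ᵀ * (fromBlocks Q 0 0 R) =
      fromBlocks (Qᵀ * Q) 0 0 (Rᵀ * R) := by
    rw [Matrix.fromBlocks_transpose, Matrix.fromBlocks_multiply]
    simp
  rw [fNorm, hT, trace_fromBlocks']
  have h1 : Matrix.trace (Qᵀ * Q) ≤ C ^ 2 := by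
    have h' : Real.sqrt (Matrix.trace (Qᵀ * Q)) ≤ C := hQ
    calc Matrix.trace (Qᵀ * Q) = Real.sqrt (Matrix.trace (Qᵀ * Q)) ^ 2 :=
          (Real.sq_sqrt (trace_tmul_nonneg Q)).symm
      _ ≤ C ^ 2 := by nlinarith [Real.sqrt_nonneg (Matrix.trace (Qᵀ * Q))]
  have h2 : Matrix.trace (Rᵀ * R) ≤ C ^ 2 := by
    have h' : Real.sqrt (Matrix.trace (Rᵀ * R)) ≤ C := hR
    calc Matrix.trace (Rᵀ * R) = Real.sqrt (Matrix.trace (Rᵀ * R)) ^ 2 :=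
          (Real.sq_sqrt (trace_tmul_nonneg R)).symm
      _ ≤ C ^ 2 := by nlinarith [Real.sqrt_nonneg (Matrix.trace (Rᵀ * R))]
  calc Real.sqrt (Matrix.trace (Qᵀ * Q) + Matrix.trace (Rᵀ * R))
      ≤ Real.sqrt (2 * C ^ 2) := Real.sqrt_le_sqrt (by linarith)
    _ = Real.sqrt 2 * C := by
        rw [Real.sqrt_mul (by norm_num), Real.sqrt_sq hC]

lemma psd_smul {n : Type*} [Fintype n] {M : Matrix n n ℝ} (hM : M.PosSemidef) {c : ℝ}
    (hc : 0 ≤ c) : (c • M).PosSemidef := by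
  refine ⟨?_, fun x => ?_⟩
  · unfold Matrix.IsHermitian
    rw [Matrix.conjTranspose_smul, hM.1]
    norm_num
  · exact (hM.smul hc).2 x

lemma psd_add {n : Type*} [Fintype n] {M N : Matrix n n ℝ} (hM : M.PosSemidef)
    (hN : N.PosSemidef) : (M + N).PosSemidef := by
  refine ⟨?_, fun x => ?_⟩
  · unfold Matrix.IsHermitian
    rw [Matrix.conjTranspose_add, hM.1, hN.1]
  · exact (hM.add hN).2 x

lemma psd_sum {n : Type*} [Fintype n] {κ : Type*} (s : Finset κ) (f : κ → Matrix n n ℝ)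
    (h : ∀ i ∈ s, (f i).PosSemidef) : (∑ i ∈ s, f i).PosSemidef := by
  classical
  induction s using Finset.cons_induction with
  | empty => simpa using Matrix.PosSemidef.zero
  | cons a s ha ih =>
    rw [Finset.sum_cons]
    exact psd_add (h a (Finset.mem_cons_self a s)) (ih fun i hi => h i (Finset.mem_cons_of_mem hi))

lemma feasible_combo {d k m : ℕ} {A : Matrix (Fin d) (Fin d) ℝ} {B : Matrix (Fin d) (Fin k) ℝ}
    {W : Matrix (Fin d) (Fin d) ℝ} {ν : ℝ} (w : Fin m → ℝ) (hw : ∀ i, 0 ≤ w i)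
    (hsum : ∑ i, w i = 1) (Sg : Fin m → Matrix (Fin d ⊕ Fin k) (Fin d ⊕ Fin k) ℝ)
    (hSg : ∀ i, Feasible A B W ν (Sg i)) :
    Feasible A B W ν (∑ i, w i • Sg i) := by
  refine ⟨psd_sum _ _ fun i _ => psd_smul (hSg i).1 (hw i), ?_, ?_⟩
  · rw [Matrix.trace_sum]
    calc ∑ i, Matrix.trace (w i • Sg i) = ∑ i, w i * Matrix.trace (Sg i) := by
          simp [Matrix.trace_smul]
      _ ≤ ∑ i, w i * ν := Finset.sum_le_sum fun i _ =>
          mul_le_mul_of_nonneg_left (hSg i).2.1 (hw i)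
      _ = ν := by rw [← Finset.sum_mul, hsum, one_mul]
  · have hblk : (∑ i, w i • Sg i).toBlocks₁₁ = ∑ i, w i • (Sg i).toBlocks₁₁ := by
      ext p q
      simp [Matrix.toBlocks₁₁, Matrix.sum_apply]
    rw [hblk]
    have hcon : ∀ i, (Sg i).toBlocks₁₁ = fromCols A B * Sg i * (fromCols A B)ᵀ + W :=
      fun i => (hSg i).2.2
    calc ∑ i, w i • (Sg i).toBlocks₁₁
        = ∑ i, (w i • (fromCols A B * Sg i * (fromCols A B)ᵀ) + w i • W) := by
          refine Finset.sum_congr rfl fun i _ => ?_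
          rw [hcon i, smul_add]
      _ = fromCols A B * (∑ i, w i • Sg i) * (fromCols A B)ᵀ + W := by
          rw [Finset.sum_add_distrib, ← Finset.sum_smul, hsum, one_smul]
          congr 1
          rw [Matrix.mul_sum, Matrix.sum_mul]
          refine Finset.sum_congr rfl fun i _ => ?_
          rw [Matrix.mul_smul, Matrix.smul_mul]

end Aux


set_option maxHeartbeats 1600000 in
/-- consecutive iterates of distributed online gradient descent on the SDP
feasible set move at most `4√(2m) C η / (1 - β)` in Frobenius norm. -/
theorem stmt15 {m d k : ℕ}
    (A : Matrix (Fin d) (Fin d) ℝ) (B : Matrix (Fin d) (Fin k) ℝ)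
    (W : Matrix (Fin d) (Fin d) ℝ) (ν C η β : ℝ)
    (hν : 0 < ν) (hη : 0 < η) (hC : 0 ≤ C) (hβ0 : 0 ≤ β) (hβ1 : β < 1)
    (P : Matrix (Fin m) (Fin m) ℝ)
    (hpos : ∀ i j, 0 ≤ P i j)
    (hrow : ∀ i, ∑ j, P i j = 1) (hcol : ∀ j, ∑ i, P i j = 1)
    (hspec : sNorm (P - (m : ℝ)⁻¹ • Matrix.of (fun _ _ => (1 : ℝ))) ≤ β)
    (Q : Fin m → ℕ → Matrix (Fin d) (Fin d) ℝ)
    (R : Fin m → ℕ → Matrix (Fin k) (Fin k) ℝ)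
    (hQ : ∀ i t, (Q i t).PosSemidef) (hR : ∀ i t, (R i t).PosSemidef)
    (htrQ : ∀ i t, (Q i t).trace ≤ C) (htrR : ∀ i t, (R i t).trace ≤ C)
    (L : Fin m → ℕ → Matrix (Fin d ⊕ Fin k) (Fin d ⊕ Fin k) ℝ)
    (hL : ∀ i t, L i t = fromBlocks (Q i t) 0 0 (R i t))
    (proj : Matrix (Fin d ⊕ Fin k) (Fin d ⊕ Fin k) ℝ →
      Matrix (Fin d ⊕ Fin k) (Fin d ⊕ Fin k) ℝ)
    (hprojmem : ∀ M, Feasible A B W ν (proj M))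
    (hprojmin : ∀ M Sg, Feasible A B W ν Sg → fNorm (M - proj M) ≤ fNorm (M - Sg))
    (Sg1 : Matrix (Fin d ⊕ Fin k) (Fin d ⊕ Fin k) ℝ) (hSg1 : Feasible A B W ν Sg1)
    (It : Fin m → ℕ → Matrix (Fin d ⊕ Fin k) (Fin d ⊕ Fin k) ℝ)
    (hinit : ∀ i, It i 1 = Sg1)
    (hrec : ∀ i t, 1 ≤ t →
      It i (t + 1) = proj ((∑ j, P j i • It j t) - η • L i t))
    (j : Fin m) (t : ℕ) (ht : 1 ≤ t) :
    fNorm (It j (t + 1) - It j t) ≤ 4 * Real.sqrt (2 * m) * C * η / (1 - β) := by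
  classical
  have hm1 : 1 ≤ m := Nat.one_le_iff_ne_zero.mpr (fun h => (h ▸ j).elim0)
  have hmR : (1:ℝ) ≤ (m:ℝ) := by exact_mod_cast hm1
  have hm0 : (m:ℝ) ≠ 0 := by linarith
  have hβ' : 0 < 1 - β := by linarith
  set G : ℝ := Real.sqrt 2 * C with hGdef
  have hG0 : 0 ≤ G := mul_nonneg (Real.sqrt_nonneg 2) hC
  set Ahat : Matrix (Fin m) (Fin m) ℝ := P - (m : ℝ)⁻¹ • Matrix.of (fun _ _ => (1 : ℝ))
    with hAhat
  have hAentry : ∀ a b, Ahat a b = P a b - (m:ℝ)⁻¹ := by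
    intro a b
    simp [hAhat, Matrix.sub_apply, Matrix.smul_apply]
  set Sbar : ℕ → Matrix (Fin d ⊕ Fin k) (Fin d ⊕ Fin k) ℝ :=
    fun s => (m:ℝ)⁻¹ • ∑ i, It i s with hSbar
  set mix : Fin m → ℕ → Matrix (Fin d ⊕ Fin k) (Fin d ⊕ Fin k) ℝ :=
    fun i s => ∑ j', P j' i • It j' s with hmix
  set dev : Fin m → ℕ → Matrix (Fin d ⊕ Fin k) (Fin d ⊕ Fin k) ℝ :=
    fun i s => It i s - Sbar s with hdev
  set err : Fin m → ℕ → Matrix (Fin d ⊕ Fin k) (Fin d ⊕ Fin k) ℝ :=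
    fun i s => It i (s+1) - mix i s with herrdef
  set ebar : ℕ → Matrix (Fin d ⊕ Fin k) (Fin d ⊕ Fin k) ℝ :=
    fun s => (m:ℝ)⁻¹ • ∑ i, err i s with hebar
  set Kc : ℝ := Real.sqrt m * (2 * η * G) with hKc
  have hKc0 : 0 ≤ Kc := by
    rw [hKc]
    exact mul_nonneg (Real.sqrt_nonneg _) (by positivity)
  -- feasibility of all iterates
  have hfeas : ∀ i s, 1 ≤ s → Feasible A B W ν (It i s) := by
    intro i s hs
    match s, hs with
    | 1, _ => rw [hinit]; exact hSg1
    | (s+2), _ =>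
      rw [hrec i (s+1) (by omega)]
      exact hprojmem _
  have hmixfeas : ∀ i s, 1 ≤ s → Feasible A B W ν (mix i s) := by
    intro i s hs
    simp only [hmix]
    exact feasible_combo (fun j' => P j' i) (fun j' => hpos j' i) (hcol i)
      (fun j' => It j' s) (fun j' => hfeas j' s hs)
  -- cost matrices are bounded
  have hLnorm : ∀ i s, fNorm (L i s) ≤ G := by
    intro i s
    rw [hL, hGdef]
    exact fNorm_fromBlocks_le hC
      (le_trans (fNorm_psd_le_trace (hQ i s)) (htrQ i s))
      (le_trans (fNorm_psd_le_trace (hR i s)) (htrR i s))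
  have hrec' : ∀ i s, 1 ≤ s → It i (s+1) = proj (mix i s - η • L i s) := by
    intro i s hs
    simp only [hmix]
    exact hrec i s hs
  -- per-step error bound
  have herrb : ∀ i s, 1 ≤ s → fNorm (err i s) ≤ 2 * η * G := by
    intro i s hs
    have h1 : err i s = (proj (mix i s - η • L i s) - (mix i s - η • L i s))
        + (-(η • L i s)) := by
      simp only [herrdef]
      rw [hrec' i s hs]
      abel
    have hstep1 : fNorm (proj (mix i s - η • L i s) - (mix i s - η • L i s)) ≤ η * G := by
      have heq : proj (mix i s - η • L i s) - (mix i s - η • L i s)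
          = -((mix i s - η • L i s) - proj (mix i s - η • L i s)) := by abel
      rw [heq, fNorm_neg']
      calc fNorm ((mix i s - η • L i s) - proj (mix i s - η • L i s))
          ≤ fNorm ((mix i s - η • L i s) - mix i s) :=
            hprojmin _ _ (hmixfeas i s hs)
        _ = fNorm (-(η • L i s)) := by rw [sub_sub_cancel_left]
        _ = η * fNorm (L i s) := by
            rw [fNorm_neg', fNorm_smul', abs_of_pos hη]
        _ ≤ η * G := mul_le_mul_of_nonneg_left (hLnorm i s) hη.le
    have hstep2 : fNorm (-(η • L i s)) ≤ η * G := by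
      rw [fNorm_neg', fNorm_smul', abs_of_pos hη]
      exact mul_le_mul_of_nonneg_left (hLnorm i s) hη.le
    calc fNorm (err i s)
        ≤ fNorm (proj (mix i s - η • L i s) - (mix i s - η • L i s))
          + fNorm (-(η • L i s)) := by rw [h1]; exact fNorm_add_le _ _
      _ ≤ 2 * η * G := by linarith
  -- sum of the mixed iterates
  have hsummix : ∀ s, (∑ i, mix i s) = ∑ j', It j' s := by
    intro s
    simp only [hmix]
    rw [Finset.sum_comm]
    refine Finset.sum_congr rfl fun j' _ => ?_
    rw [← Finset.sum_smul, hrow j', one_smul]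
  have hSbarsucc : ∀ s, Sbar (s+1) = Sbar s + ebar s := by
    intro s
    simp only [hSbar, hebar, herrdef]
    rw [← smul_add]
    congr 1
    rw [← Finset.sum_add_distrib, Finset.sum_congr rfl
      (fun i _ => (rfl : It i s + (It i (s+1) - mix i s) = _)),
      Finset.sum_add_distrib, Finset.sum_sub_distrib]
    rw [show (∑ i, mix i s) = ∑ j', It j' s from hsummix s]
    abel
  -- deviation identity for mixing
  have hKEY : ∀ i s, (∑ j', (P j' i - (m:ℝ)⁻¹) • dev j' s) = mix i s - Sbar s := by
    intro i s
    have hterm : ∀ j' : Fin m, (P j' i - (m:ℝ)⁻¹) • dev j' s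
        = P j' i • dev j' s - (m:ℝ)⁻¹ • dev j' s := fun j' => sub_smul _ _ _
    rw [Finset.sum_congr rfl fun j' _ => hterm j', Finset.sum_sub_distrib]
    have hdevsum : (∑ j' : Fin m, dev j' s) = 0 := by
      simp only [hdev]
      rw [Finset.sum_sub_distrib, Finset.sum_const, Finset.card_univ, Fintype.card_fin,
        ← Nat.cast_smul_eq_nsmul ℝ]
      simp only [hSbar]
      rw [smul_smul, mul_inv_cancel₀ hm0, one_smul, sub_self]
    have hz : (∑ j' : Fin m, (m:ℝ)⁻¹ • dev j' s) = 0 := by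
      rw [← Finset.smul_sum, hdevsum, smul_zero]
    have hfirst : (∑ j' : Fin m, P j' i • dev j' s) = mix i s - Sbar s := by
      simp only [hdev]
      rw [Finset.sum_congr rfl fun j' _ => smul_sub (P j' i) (It j' s) (Sbar s),
        Finset.sum_sub_distrib, ← Finset.sum_smul, hcol i, one_smul]
    rw [hz, hfirst, sub_zero]
  -- deviation recursion
  have hItsplit : ∀ i s, It i (s+1) = mix i s + err i s := by
    intro i s
    simp only [herrdef]
    abel
  have hdevrec : ∀ i s, dev i (s+1)
      = (∑ j', (P j' i - (m:ℝ)⁻¹) • dev j' s) + (err i s - ebar s) := by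
    intro i s
    rw [hKEY i s]
    simp only [hdev]
    rw [hItsplit i s, hSbarsucc s]
    abel
  -- stacked deviation vector
  set bigdev : ℕ → PiLp 2 (fun _ : Fin m =>
      EuclideanSpace ℝ ((Fin d ⊕ Fin k) × (Fin d ⊕ Fin k))) :=
    fun s => (WithLp.equiv 2 _).symm (fun i => toE (dev i s)) with hbig
  have hbigapp : ∀ s i, bigdev s i = toE (dev i s) := by
    intro s i
    simp only [hbig]
    rfl
  have hbignorm : ∀ s, ‖bigdev s‖ ^ 2 = ∑ i, fNorm (dev i s) ^ 2 := by
    intro s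
    rw [PiLp.norm_sq_eq_of_L2]
    exact Finset.sum_congr rfl fun i _ => by rw [hbigapp s i, ← fNorm_eq']
  -- base case : all deviations vanish at time 1
  have hdev1 : ∀ i, dev i 1 = 0 := by
    intro i
    simp only [hdev, hSbar, hinit]
    rw [Finset.sum_const, Finset.card_univ, Fintype.card_fin,
      ← Nat.cast_smul_eq_nsmul ℝ, smul_smul, inv_mul_cancel₀ hm0, one_smul, sub_self]
  have hbig1 : ‖bigdev 1‖ = 0 := by
    have : bigdev 1 = 0 := by
      simp only [hbig, hdev1, map_zero]
      rw [show (fun _ : Fin m => (0 : EuclideanSpace ℝ ((Fin d ⊕ Fin k) × (Fin d ⊕ Fin k))))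
          = 0 from rfl]
      rfl
    rw [this, norm_zero]
  -- one-step contraction bound
  have hstep : ∀ s, 1 ≤ s → ‖bigdev (s+1)‖ ≤ β * ‖bigdev s‖ + Kc := by
    intro s hs
    set mvec : PiLp 2 (fun _ : Fin m =>
        EuclideanSpace ℝ ((Fin d ⊕ Fin k) × (Fin d ⊕ Fin k))) :=
      (WithLp.equiv 2 _).symm (fun i => ∑ j', Ahat j' i • toE (dev j' s)) with hmvec
    set evec : PiLp 2 (fun _ : Fin m =>
        EuclideanSpace ℝ ((Fin d ⊕ Fin k) × (Fin d ⊕ Fin k))) :=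
      (WithLp.equiv 2 _).symm (fun i => toE (err i s) - toE (ebar s)) with hevec
    have hcomp : ∀ i, toE (dev i (s+1))
        = (∑ j', Ahat j' i • toE (dev j' s)) + (toE (err i s) - toE (ebar s)) := by
      intro i
      rw [hdevrec i s, map_add, map_sub, map_sum]
      congr 1
      refine Finset.sum_congr rfl fun j' _ => ?_
      rw [toE.map_smul, hAentry]
    have hsplit : bigdev (s+1) = mvec + evec := by
      simp only [hbig, hmvec, hevec]
      rw [show (fun i => toE (dev i (s+1)))
          = (fun i => ∑ j', Ahat j' i • toE (dev j' s))
            + (fun i => toE (err i s) - toE (ebar s)) from funext hcomp]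
      rfl
    have hmv : ‖mvec‖ ≤ β * ‖bigdev s‖ := by
      apply le_of_sq_le_sq' (norm_nonneg _) (mul_nonneg hβ0 (norm_nonneg _))
      have h1 : ‖mvec‖ ^ 2 = ∑ i, ‖∑ j', Ahat j' i • toE (dev j' s)‖ ^ 2 := by
        rw [PiLp.norm_sq_eq_of_L2]
        exact Finset.sum_congr rfl fun i _ => by
          rw [hmvec]; rfl
      have h2 : ∑ j', ‖toE (dev j' s)‖ ^ 2 = ‖bigdev s‖ ^ 2 := by
        rw [hbignorm]
        exact Finset.sum_congr rfl fun j' _ => by rw [← fNorm_eq']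
      calc ‖mvec‖ ^ 2 = ∑ i, ‖∑ j', Ahat j' i • toE (dev j' s)‖ ^ 2 := h1
        _ ≤ sNorm Ahat ^ 2 * ∑ j', ‖toE (dev j' s)‖ ^ 2 := mix_bound Ahat _
        _ ≤ β ^ 2 * ‖bigdev s‖ ^ 2 := by
            rw [h2]
            exact mul_le_mul_of_nonneg_right
              (pow_le_pow_left₀ (sNorm_nonneg_s15 Ahat) hspec 2) (by positivity)
        _ = (β * ‖bigdev s‖) ^ 2 := by ring
    have hev : ‖evec‖ ≤ Kc := by
      apply le_of_sq_le_sq' (norm_nonneg _) hKc0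
      have h1 : ‖evec‖ ^ 2 = ∑ i, ‖toE (err i s) - toE (ebar s)‖ ^ 2 := by
        rw [PiLp.norm_sq_eq_of_L2]
        exact Finset.sum_congr rfl fun i _ => by
          rw [hevec]; rfl
      have hebar' : toE (ebar s) = (m:ℝ)⁻¹ • ∑ i', toE (err i' s) := by
        simp only [hebar]
        rw [toE.map_smul, map_sum]
      calc ‖evec‖ ^ 2 = ∑ i, ‖toE (err i s) - toE (ebar s)‖ ^ 2 := h1
        _ = ∑ i, ‖toE (err i s) - (m:ℝ)⁻¹ • ∑ i', toE (err i' s)‖ ^ 2 := by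
            rw [hebar']
        _ ≤ ∑ i, ‖toE (err i s)‖ ^ 2 := variance_le _
        _ ≤ ∑ _i : Fin m, (2 * η * G) ^ 2 := by
            refine Finset.sum_le_sum fun i _ => ?_
            rw [← fNorm_eq']
            exact pow_le_pow_left₀ (fNorm_nonneg' _) (herrb i s hs) 2
        _ = (m:ℝ) * (2 * η * G) ^ 2 := by
            simp [Finset.card_univ]
        _ = Kc ^ 2 := by
            rw [hKc, mul_pow (Real.sqrt (m:ℝ)) (2*η*G), Real.sq_sqrt (by positivity : (0:ℝ) ≤ (m:ℝ))]
    calc ‖bigdev (s+1)‖ = ‖mvec + evec‖ := by rw [hsplit]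
      _ ≤ ‖mvec‖ + ‖evec‖ := norm_add_le _ _
      _ ≤ β * ‖bigdev s‖ + Kc := add_le_add hmv hev
  -- uniform consensus bound
  have hbound : ∀ s, 1 ≤ s → ‖bigdev s‖ ≤ Kc / (1 - β) := by
    intro s hs
    induction s, hs using Nat.le_induction with
    | base => rw [hbig1]; positivity
    | succ s hs ih =>
      have h1 := hstep s hs
      have h2 : β * ‖bigdev s‖ ≤ β * (Kc / (1 - β)) :=
        mul_le_mul_of_nonneg_left ih hβ0
      have h3 : β * (Kc / (1 - β)) + Kc = Kc / (1 - β) := by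
        field_simp
        ring
      linarith
  -- assembling the final bound
  have hdecomp : It j (t+1) - It j t
      = err j t + ((mix j t - Sbar t) + (Sbar t - It j t)) := by
    simp only [herrdef]
    abel
  have hKd := hbound t ht
  have e2 : fNorm (mix j t - Sbar t) ≤ β * (Kc / (1 - β)) := by
    apply le_of_sq_le_sq' (fNorm_nonneg' _)
      (mul_nonneg hβ0 (by positivity))
    have heq : fNorm (mix j t - Sbar t) = ‖∑ j', Ahat j' j • toE (dev j' t)‖ := by
      rw [← hKEY j t, fNorm_eq', map_sum]
      congr 1
      refine Finset.sum_congr rfl fun j' _ => ?_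
      rw [toE.map_smul, hAentry]
    have h2 : ∑ j', ‖toE (dev j' t)‖ ^ 2 = ‖bigdev t‖ ^ 2 := by
      rw [hbignorm]
      exact Finset.sum_congr rfl fun j' _ => by rw [← fNorm_eq']
    calc fNorm (mix j t - Sbar t) ^ 2
        = ‖∑ j', Ahat j' j • toE (dev j' t)‖ ^ 2 := by rw [heq]
      _ ≤ ∑ i, ‖∑ j', Ahat j' i • toE (dev j' t)‖ ^ 2 :=
          Finset.single_le_sum
            (f := fun i => ‖∑ j', Ahat j' i • toE (dev j' t)‖ ^ 2)
            (fun i _ => by positivity) (Finset.mem_univ j)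
      _ ≤ sNorm Ahat ^ 2 * ∑ j', ‖toE (dev j' t)‖ ^ 2 := mix_bound Ahat _
      _ ≤ β ^ 2 * (Kc / (1 - β)) ^ 2 := by
          rw [h2]
          have hb2 : ‖bigdev t‖ ^ 2 ≤ (Kc / (1 - β)) ^ 2 :=
            pow_le_pow_left₀ (norm_nonneg _) hKd 2
          have hs2 : sNorm Ahat ^ 2 ≤ β ^ 2 :=
            pow_le_pow_left₀ (sNorm_nonneg_s15 Ahat) hspec 2
          calc sNorm Ahat ^ 2 * ‖bigdev t‖ ^ 2
              ≤ β ^ 2 * ‖bigdev t‖ ^ 2 :=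
                mul_le_mul_of_nonneg_right hs2 (by positivity)
            _ ≤ β ^ 2 * (Kc / (1 - β)) ^ 2 :=
                mul_le_mul_of_nonneg_left hb2 (by positivity)
      _ = (β * (Kc / (1 - β))) ^ 2 := by ring
  have e3 : fNorm (Sbar t - It j t) ≤ Kc / (1 - β) := by
    apply le_of_sq_le_sq' (fNorm_nonneg' _) (by positivity)
    have heq : fNorm (Sbar t - It j t) = fNorm (dev j t) := by
      have : Sbar t - It j t = -(dev j t) := by simp only [hdev]; abel
      rw [this, fNorm_neg']
    calc fNorm (Sbar t - It j t) ^ 2 = fNorm (dev j t) ^ 2 := by rw [heq]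
      _ ≤ ∑ i, fNorm (dev i t) ^ 2 :=
          Finset.single_le_sum (f := fun i => fNorm (dev i t) ^ 2)
            (fun i _ => by positivity) (Finset.mem_univ j)
      _ = ‖bigdev t‖ ^ 2 := (hbignorm t).symm
      _ ≤ (Kc / (1 - β)) ^ 2 := pow_le_pow_left₀ (norm_nonneg _) hKd 2
  have e1 := herrb j t ht
  have htri : fNorm (It j (t+1) - It j t)
      ≤ fNorm (err j t) + (fNorm (mix j t - Sbar t) + fNorm (Sbar t - It j t)) := by
    rw [hdecomp]
    calc fNorm (err j t + ((mix j t - Sbar t) + (Sbar t - It j t)))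
        ≤ fNorm (err j t) + fNorm ((mix j t - Sbar t) + (Sbar t - It j t)) :=
          fNorm_add_le _ _
      _ ≤ fNorm (err j t) + (fNorm (mix j t - Sbar t) + fNorm (Sbar t - It j t)) := by
          linarith [fNorm_add_le (mix j t - Sbar t) (Sbar t - It j t)]
  -- final numeric computation
  have hsm : 1 ≤ Real.sqrt m := by
    rw [show (1:ℝ) = Real.sqrt 1 by simp]
    exact Real.sqrt_le_sqrt hmR
  have h2ηG : 2 * η * G ≤ Kc := by
    rw [hKc]
    nlinarith [mul_nonneg (mul_nonneg (by norm_num : (0:ℝ) ≤ 2) hη.le) hG0]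
  have htarget : 4 * Real.sqrt (2 * m) * C * η / (1 - β) = 2 * Kc / (1 - β) := by
    rw [hKc, hGdef]
    rw [show ((2:ℝ) * m) = (2:ℝ) * (m:ℝ) by push_cast; ring,
      Real.sqrt_mul (by norm_num : (0:ℝ) ≤ 2)]
    ring
  have hgap : 2 * Kc / (1 - β) - (β * (Kc / (1 - β)) + Kc / (1 - β)) = Kc := by
    field_simp
    ring
  rw [htarget]
  linarith
end
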